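/- Two d-minimal triangles S and T are G-equivalent if and only if their weight multisets are equal: W(S) = W(T). -/

import Mathlib

noncomputable section

/-- The lattice `(1/d)ℤ × (1/d)ℤ` inside `ℝ × ℝ`. -/
def Ld (d : ℕ) : Set (ℝ × ℝ) :=
  {p | ∃ a b : ℤ, p = ((a : ℝ) / d, (b : ℝ) / d)}

/-- A `d`-minimal triangle: vertices in `L_d`, not collinear, and the closed triangle
meets `L_d` exactly in its three vertices. -/
def IsMinimalTriangle (d : ℕ) (p q r : ℝ × ℝ) : Prop :=
  p ∈ Ld d ∧ q ∈ Ld d ∧ r ∈ Ld d ∧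
    ¬ Collinear ℝ ({p, q, r} : Set (ℝ × ℝ)) ∧
    convexHull ℝ ({p, q, r} : Set (ℝ × ℝ)) ∩ Ld d = {p, q, r}

/-- An element of `G = GL₂(ℤ) ⋉ ℤ²`: an integer matrix `[[a,b],[c,e]]` of determinant
`±1` together with an integer translation vector `(v1, v2)`. -/
structure GMap where
  a : ℤ
  b : ℤ
  c : ℤ
  e : ℤ
  v1 : ℤ
  v2 : ℤ
  unimod : a * e - b * c = 1 ∨ a * e - b * c = -1

/-- The affine action `x ↦ Ux + v` of a `GMap` on `ℝ²`. -/
def GMap.app (g : GMap) (p : ℝ × ℝ) : ℝ × ℝ :=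
  ((g.a : ℝ) * p.1 + (g.b : ℝ) * p.2 + (g.v1 : ℝ),
   (g.c : ℝ) * p.1 + (g.e : ℝ) * p.2 + (g.v2 : ℝ))

/-- A `d`-minimal segment: endpoints in `L_d`, distinct, and the closed segment meets
`L_d` exactly in its two endpoints. -/
def IsMinimalSegment (d : ℕ) (p q : ℝ × ℝ) : Prop :=
  p ∈ Ld d ∧ q ∈ Ld d ∧ p ≠ q ∧ segment ℝ p q ∩ Ld d = {p, q}

/-- The point of `L_d` with integer numerator data `p : ℤ × ℤ`. -/
def pt (d : ℕ) (p : ℤ × ℤ) : ℝ × ℝ := ((p.1 : ℝ) / d, (p.2 : ℝ) / d)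

/-- Counterclockwise orientation of the ordered triple of numerator data. -/
def ccwZ (p q r : ℤ × ℤ) : Prop :=
  0 < (q.1 - p.1) * (r.2 - p.2) - (q.2 - p.2) * (r.1 - p.1)

/-- Weight (mod `d`) of the oriented minimal segment from `(w/d, x/d)` to `(y/d, z/d)`,
given by numerator data `(w,x)` and `(y,z)`. -/
def segWeight (d : ℕ) (p q : ℤ × ℤ) : ZMod d :=
  ((p.1 * q.2 - p.2 * q.1 : ℤ) : ZMod d)

/-- The multiset of weights of the three edges `p→q`, `q→r`, `r→p` of a triangle
given by numerator data. -/
def triWeight (d : ℕ) (p q r : ℤ × ℤ) : Multiset (ZMod d) :=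
  {segWeight d p q, segWeight d q r, segWeight d r p}


lemma pt_inj {d : ℕ} (hd : d ≠ 0) {x y : ℤ × ℤ} (h : pt d x = pt d y) : x = y := by
  have hd' : (d : ℝ) ≠ 0 := Nat.cast_ne_zero.mpr hd
  rcases x with ⟨x1, x2⟩; rcases y with ⟨y1, y2⟩
  simp only [pt, Prod.mk.injEq, div_eq_div_iff hd' hd'] at h
  obtain ⟨h1, h2⟩ := h
  have e1 : x1 = y1 := by exact_mod_cast mul_right_cancel₀ hd' h1
  have e2 : x2 = y2 := by exact_mod_cast mul_right_cancel₀ hd' h2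
  simp [e1, e2]

lemma pt_mem_Ld {d : ℕ} (x : ℤ × ℤ) : pt d x ∈ Ld d := ⟨x.1, x.2, rfl⟩

def nmap (g : GMap) (d : ℕ) (x : ℤ × ℤ) : ℤ × ℤ :=
  (g.a * x.1 + g.b * x.2 + d * g.v1, g.c * x.1 + g.e * x.2 + d * g.v2)

lemma app_pt (g : GMap) {d : ℕ} (hd : d ≠ 0) (x : ℤ × ℤ) :
    g.app (pt d x) = pt d (nmap g d x) := by
  have hd' : (d : ℝ) ≠ 0 := Nat.cast_ne_zero.mpr hd
  simp only [GMap.app, pt, nmap, Prod.mk.injEq]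
  constructor <;> · push_cast; field_simp

lemma det_sq (g : GMap) : (g.a * g.e - g.b * g.c) * (g.a * g.e - g.b * g.c) = 1 := by
  rcases g.unimod with h | h <;> rw [h] <;> ring

lemma app_injective (g : GMap) : Function.Injective g.app := by
  intro x y h
  simp only [GMap.app, Prod.mk.injEq] at h
  obtain ⟨h1, h2⟩ := h
  have hD : ((g.a * g.e - g.b * g.c : ℤ) : ℝ) ≠ 0 := by
    rcases g.unimod with h | h <;> rw [h] <;> norm_num
  have e1 : ((g.a * g.e - g.b * g.c : ℤ) : ℝ) * (x.1 - y.1) = 0 := by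
    push_cast; linear_combination (g.e : ℝ) * h1 - (g.b : ℝ) * h2
  have e2 : ((g.a * g.e - g.b * g.c : ℤ) : ℝ) * (x.2 - y.2) = 0 := by
    push_cast; linear_combination (g.a : ℝ) * h2 - (g.c : ℝ) * h1
  have f1 : x.1 = y.1 := by
    rcases mul_eq_zero.mp e1 with h | h
    exacts [absurd h hD, by linarith]
  have f2 : x.2 = y.2 := by
    rcases mul_eq_zero.mp e2 with h | h
    exacts [absurd h hD, by linarith]
  exact Prod.ext f1 f2

def GMap.comp (g h : GMap) : GMap where
  a := g.a * h.a + g.b * h.c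
  b := g.a * h.b + g.b * h.e
  c := g.c * h.a + g.e * h.c
  e := g.c * h.b + g.e * h.e
  v1 := g.a * h.v1 + g.b * h.v2 + g.v1
  v2 := g.c * h.v1 + g.e * h.v2 + g.v2
  unimod := by
    have key : (g.a * h.a + g.b * h.c) * (g.c * h.b + g.e * h.e) -
        (g.a * h.b + g.b * h.e) * (g.c * h.a + g.e * h.c) =
        (g.a * g.e - g.b * g.c) * (h.a * h.e - h.b * h.c) := by ring
    rcases g.unimod with h1 | h1 <;> rcases h.unimod with h2 | h2 <;>
      rw [key, h1, h2] <;> norm_num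

lemma app_comp (g h : GMap) (x : ℝ × ℝ) : (g.comp h).app x = g.app (h.app x) := by
  simp only [GMap.comp, GMap.app, Prod.mk.injEq]
  constructor <;> push_cast <;> ring

lemma exists_nmap_pt (g : GMap) {d : ℕ} (hd : d ≠ 0) (n : ℤ × ℤ) :
    ∃ m : ℤ × ℤ, g.app (pt d m) = pt d n := by
  refine ⟨((g.a*g.e - g.b*g.c) * (g.e * (n.1 - d * g.v1) - g.b * (n.2 - d * g.v2)),
           (g.a*g.e - g.b*g.c) * (-g.c * (n.1 - d * g.v1) + g.a * (n.2 - d * g.v2))), ?_⟩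
  rw [app_pt g hd]
  congr 1
  have hsq := det_sq g
  refine Prod.ext ?_ ?_ <;> simp only [nmap]
  · linear_combination (n.1 - (d:ℤ) * g.v1) * hsq
  · linear_combination (n.2 - (d:ℤ) * g.v2) * hsq

lemma image_inter_Ld (g : GMap) {d : ℕ} (hd : d ≠ 0) (A : Set (ℝ × ℝ)) :
    g.app '' A ∩ Ld d = g.app '' (A ∩ Ld d) := by
  apply Set.Subset.antisymm
  · rintro y ⟨⟨x, hxA, rfl⟩, hyL⟩
    obtain ⟨n1, n2, hn⟩ := hyL
    obtain ⟨m, hm⟩ := exists_nmap_pt g hd (n1, n2)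
    have hx : x = pt d m := app_injective g (by rw [hm, hn]; rfl)
    exact ⟨x, ⟨hxA, hx ▸ pt_mem_Ld m⟩, rfl⟩
  · rintro y ⟨x, ⟨hxA, hxL⟩, rfl⟩
    refine ⟨⟨x, hxA, rfl⟩, ?_⟩
    obtain ⟨n1, n2, hn⟩ := hxL
    have : x = pt d (n1, n2) := hn
    rw [this, app_pt g hd]
    exact pt_mem_Ld _

def gLin (g : GMap) : (ℝ × ℝ) →ₗ[ℝ] (ℝ × ℝ) where
  toFun x := ((g.a : ℝ) * x.1 + (g.b : ℝ) * x.2, (g.c : ℝ) * x.1 + (g.e : ℝ) * x.2)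
  map_add' x y := by refine Prod.ext ?_ ?_ <;> simp <;> ring
  map_smul' m x := by refine Prod.ext ?_ ?_ <;> simp [Prod.smul_fst, Prod.smul_snd, smul_eq_mul] <;> ring

def gAff (g : GMap) : (ℝ × ℝ) →ᵃ[ℝ] (ℝ × ℝ) where
  toFun := g.app
  linear := gLin g
  map_vadd' p v := by
    refine Prod.ext ?_ ?_ <;>
      simp [GMap.app, gLin, Prod.fst_add, Prod.snd_add] <;> ring

lemma app_image_hull (g : GMap) (s : Set (ℝ × ℝ)) :
    g.app '' convexHull ℝ s = convexHull ℝ (g.app '' s) := by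
  have h := AffineMap.image_convexHull (gAff g) s
  exact h

lemma combo_mem_hull {A B C : ℝ × ℝ} {α β γ : ℝ} (hα : 0 ≤ α) (hβ : 0 ≤ β) (hγ : 0 ≤ γ)
    (hsum : α + β + γ = 1) :
    α • A + β • B + γ • C ∈ convexHull ℝ ({A, B, C} : Set (ℝ × ℝ)) := by
  have := Finset.centerMass_mem_convexHull (t := (Finset.univ : Finset (Fin 3)))
    (w := ![α, β, γ]) (z := ![A, B, C]) (s := ({A, B, C} : Set (ℝ × ℝ))) (by
      intro i _; fin_cases i <;> simpa)
    (by simp [Fin.sum_univ_three, hsum]) (by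
      intro i _; fin_cases i <;> simp [Set.mem_insert_iff])
  rw [Finset.centerMass] at this
  simpa [Fin.sum_univ_three, hsum] using this

section MS
variable {α : Type*}

lemma mswap (a b : α) (s : Multiset α) : a ::ₘ b ::ₘ s = b ::ₘ a ::ₘ s := Multiset.cons_swap a b s

lemma mrot (a b c : α) : ({a, b, c} : Multiset α) = {b, c, a} := by
  show a ::ₘ b ::ₘ c ::ₘ 0 = b ::ₘ c ::ₘ a ::ₘ 0
  rw [Multiset.cons_swap a b]
  congr 1
  rw [Multiset.cons_swap a c]

lemma mswap23 (a b c : α) : ({a, b, c} : Multiset α) = {a, c, b} := by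
  show a ::ₘ b ::ₘ c ::ₘ 0 = a ::ₘ c ::ₘ b ::ₘ 0
  congr 1
  rw [Multiset.cons_swap b c]

lemma multiset_pair_cases (a b x y : α) (h : ({a, b} : Multiset α) = {x, y}) :
    (a = x ∧ b = y) ∨ (a = y ∧ b = x) := by
  rcases Multiset.cons_eq_cons.mp h with ⟨h1, h2⟩ | ⟨hne, cs, h1, h2⟩
  · exact Or.inl ⟨h1, by simpa using h2⟩
  · right
    have hb : b = x ∧ cs = 0 := by
      have := h1.symm
      rcases Multiset.cons_eq_cons.mp (show (b ::ₘ (0:Multiset α)) = x ::ₘ cs from h1) with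
        ⟨e1, e2⟩ | ⟨_, ds, e1, e2⟩
      · exact ⟨e1, e2.symm⟩
      · exact absurd e1 (by simp)
    have hy : y = a ∧ cs = 0 := by
      rcases Multiset.cons_eq_cons.mp (show (y ::ₘ (0:Multiset α)) = a ::ₘ cs from h2) with
        ⟨e1, e2⟩ | ⟨_, ds, e1, e2⟩
      · exact ⟨e1, e2.symm⟩
      · exact absurd e1 (by simp)
    exact ⟨hy.1.symm, hb.1⟩

lemma multiset_triple_cases (a b c x y z : α) (h : ({a, b, c} : Multiset α) = {x, y, z}) :
    (a = x ∧ b = y ∧ c = z) ∨ (a = x ∧ b = z ∧ c = y) ∨ (a = y ∧ b = x ∧ c = z) ∨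
    (a = y ∧ b = z ∧ c = x) ∨ (a = z ∧ b = x ∧ c = y) ∨ (a = z ∧ b = y ∧ c = x) := by
  rcases Multiset.cons_eq_cons.mp h with ⟨h1, h2⟩ | ⟨hne, cs, h1, h2⟩
  · rcases multiset_pair_cases _ _ _ _ h2 with ⟨e1, e2⟩ | ⟨e1, e2⟩
    · exact Or.inl ⟨h1, e1, e2⟩
    · exact Or.inr (Or.inl ⟨h1, e1, e2⟩)
  · -- h1 : {b, c} = x ::ₘ cs, h2 : {y, z} = a ::ₘ cs
    have hcard : Multiset.card cs = 1 := by
      have := congrArg Multiset.card h1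
      simpa using this
    obtain ⟨w, rfl⟩ := Multiset.card_eq_one.mp hcard
    have h1' : (b = x ∧ c = w) ∨ (b = w ∧ c = x) := multiset_pair_cases _ _ _ _ h1
    have h2' : (y = a ∧ z = w) ∨ (y = w ∧ z = a) := multiset_pair_cases _ _ _ _ h2
    rcases h1' with ⟨e1, e2⟩ | ⟨e1, e2⟩ <;> rcases h2' with ⟨f1, f2⟩ | ⟨f1, f2⟩
    · exact Or.inr (Or.inr (Or.inl ⟨f1.symm, e1, e2.trans f2.symm⟩))
    · exact Or.inr (Or.inr (Or.inr (Or.inr (Or.inl ⟨f2.symm, e1, e2.trans f1.symm⟩))))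
    · exact Or.inr (Or.inr (Or.inr (Or.inl ⟨f1.symm, e1.trans f2.symm, e2⟩)))
    · exact Or.inr (Or.inr (Or.inr (Or.inr (Or.inr ⟨f2.symm, e1.trans f1.symm, e2⟩))))

end MS

lemma segWeight_antisymm (d : ℕ) (x y : ℤ × ℤ) : segWeight d y x = - segWeight d x y := by
  unfold segWeight
  push_cast
  ring

lemma segWeight_nmap (g : GMap) (d : ℕ) (x y : ℤ × ℤ) :
    segWeight d (nmap g d x) (nmap g d y) =
      ((g.a * g.e - g.b * g.c : ℤ) : ZMod d) * segWeight d x y := by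
  unfold segWeight nmap
  have key : ((g.a * x.1 + g.b * x.2 + (d:ℤ) * g.v1) * (g.c * y.1 + g.e * y.2 + (d:ℤ) * g.v2) -
      (g.c * x.1 + g.e * x.2 + (d:ℤ) * g.v2) * (g.a * y.1 + g.b * y.2 + (d:ℤ) * g.v1)) =
      (g.a * g.e - g.b * g.c) * (x.1 * y.2 - x.2 * y.1) +
      (d:ℤ) * ((g.a * x.1 + g.b * x.2) * g.v2 - (g.c * x.1 + g.e * x.2) * g.v1 +
        g.v1 * (g.c * y.1 + g.e * y.2) - g.v2 * (g.a * y.1 + g.b * y.2)) := by ring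
  simp only []
  rw [key]
  push_cast
  simp [ZMod.natCast_self]

lemma det_one {d : ℕ} (hd : 0 < d) (p u v : ℤ × ℤ)
    (hmin : convexHull ℝ ({pt d p, pt d (p+u), pt d (p+v)} : Set (ℝ × ℝ)) ∩ Ld d
      = {pt d p, pt d (p+u), pt d (p+v)})
    (hD : 0 < u.1 * v.2 - u.2 * v.1) : u.1 * v.2 - u.2 * v.1 = 1 := by
  by_contra hne
  obtain ⟨D, hDdef⟩ : ∃ D : ℤ, D = u.1 * v.2 - u.2 * v.1 := ⟨_, rfl⟩
  rw [← hDdef] at hD hne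
  have hD2 : 2 ≤ D := by omega
  have hd0 : d ≠ 0 := hd.ne'
  have hdR : (d : ℝ) ≠ 0 := Nat.cast_ne_zero.mpr hd0
  have hDR : (D : ℝ) ≠ 0 := by
    have : (0:ℝ) < (D:ℝ) := by exact_mod_cast hD
    linarith
  have key : ∀ a b z1 z2 : ℤ, 0 ≤ a → a < D → 0 ≤ b → b < D → a + b ≤ D →
      ¬(a = 0 ∧ b = 0) → D * z1 = a * u.1 + b * v.1 → D * z2 = a * u.2 + b * v.2 → False := by
    intro a b z1 z2 ha0 haD hb0 hbD hab hab0 hz1 hz2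
    have hz1R : (D:ℝ) * z1 = a * u.1 + b * v.1 := by exact_mod_cast congrArg (Int.cast : ℤ → ℝ) hz1
    have hz2R : (D:ℝ) * z2 = a * u.2 + b * v.2 := by exact_mod_cast congrArg (Int.cast : ℤ → ℝ) hz2
    have hcombo : (((D - a - b : ℤ):ℝ)/(D:ℝ)) • pt d p + ((a:ℝ)/(D:ℝ)) • pt d (p+u)
        + ((b:ℝ)/(D:ℝ)) • pt d (p+v) = pt d (p.1 + z1, p.2 + z2) := by
      refine Prod.ext ?_ ?_ <;>
        simp only [pt, Prod.smul_fst, Prod.smul_snd, Prod.fst_add, Prod.snd_add,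
          smul_eq_mul] <;> push_cast <;> field_simp
      · linear_combination (-1:ℝ) * hz1R
      · linear_combination (-1:ℝ) * hz2R
    have hmem : pt d (p.1 + z1, p.2 + z2) ∈
        convexHull ℝ ({pt d p, pt d (p+u), pt d (p+v)} : Set (ℝ × ℝ)) := by
      rw [← hcombo]
      have hDpos : (0:ℝ) < (D:ℝ) := by exact_mod_cast hD
      apply combo_mem_hull
      · apply div_nonneg _ hDpos.le
        exact_mod_cast (by omega : (0:ℤ) ≤ D - a - b)
      · apply div_nonneg _ hDpos.le; exact_mod_cast ha0
      · apply div_nonneg _ hDpos.le; exact_mod_cast hb0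
      · rw [← add_div, ← add_div, div_eq_one_iff_eq hDR]; push_cast; ring
    have hvert : pt d (p.1 + z1, p.2 + z2) ∈ ({pt d p, pt d (p+u), pt d (p+v)} : Set (ℝ × ℝ)) := by
      rw [← hmin]; exact ⟨hmem, pt_mem_Ld _⟩
    rcases hvert with h | h | h
    · have := pt_inj hd0 h
      have e1 : z1 = 0 := by have := congrArg Prod.fst this; simpa using this
      have e2 : z2 = 0 := by have := congrArg Prod.snd this; simpa using this
      subst e1; subst e2
      have hA : a * D = 0 := by linear_combination v.1 * hz2 - v.2 * hz1 + a * hDdef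
      have hB : b * D = 0 := by linear_combination u.2 * hz1 - u.1 * hz2 + b * hDdef
      rcases mul_eq_zero.mp hA with h | h
      · rcases mul_eq_zero.mp hB with h' | h'
        · exact hab0 ⟨h, h'⟩
        · omega
      · omega
    · have := pt_inj hd0 h
      have e1 : z1 = u.1 := by have := congrArg Prod.fst this; simp at this; omega
      have e2 : z2 = u.2 := by have := congrArg Prod.snd this; simp at this; omega
      subst e1; subst e2
      have hA : D * (D - a) = 0 := by linear_combination v.2 * hz1 - v.1 * hz2 + (D - a) * hDdef
      rcases mul_eq_zero.mp hA with h' | h' <;> omega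
    · have := pt_inj hd0 h
      have e1 : z1 = v.1 := by have := congrArg Prod.fst this; simp at this; omega
      have e2 : z2 = v.2 := by have := congrArg Prod.snd this; simp at this; omega
      subst e1; subst e2
      have hB : D * (D - b) = 0 := by linear_combination u.1 * hz2 - u.2 * hz1 + (D - b) * hDdef
      rcases mul_eq_zero.mp hB with h' | h' <;> omega
  -- find w not in the sublattice
  have hw : ∃ w1 w2 : ℤ, ¬((D ∣ w1 * v.2 - w2 * v.1) ∧ (D ∣ u.1 * w2 - u.2 * w1)) := by
    by_contra hall
    push_neg at hall
    have h10 := hall 1 0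
    have h01 := hall 0 1
    have dv2 : D ∣ v.2 := by simpa using h10.1
    have du2 : D ∣ u.2 := by have := h10.2; simpa using this
    have dv1 : D ∣ v.1 := by have := h01.1; simpa using this
    have du1 : D ∣ u.1 := by simpa using h01.2
    obtain ⟨k1, hk1⟩ := du1
    obtain ⟨k2, hk2⟩ := du2
    obtain ⟨k3, hk3⟩ := dv1
    obtain ⟨k4, hk4⟩ := dv2
    have hDm : D = (D * k1) * (D * k4) - (D * k2) * (D * k3) := by
      rw [← hk1, ← hk2, ← hk3, ← hk4]; exact hDdef
    have h1 : D * 1 = D * (D * (k1 * k4 - k2 * k3)) := by linear_combination hDm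
    have hdvd1 : D ∣ 1 := ⟨k1 * k4 - k2 * k3, mul_left_cancel₀ (by omega) h1⟩
    have := Int.le_of_dvd one_pos hdvd1
    omega
  obtain ⟨w1, w2, hwnd⟩ := hw
  set A : ℤ := w1 * v.2 - w2 * v.1 with hA
  set B : ℤ := u.1 * w2 - u.2 * w1 with hB
  have ha0 : 0 ≤ A % D := Int.emod_nonneg A (by omega)
  have haD : A % D < D := Int.emod_lt_of_pos A (by omega)
  have hb0 : 0 ≤ B % D := Int.emod_nonneg B (by omega)
  have hbD : B % D < D := Int.emod_lt_of_pos B (by omega)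
  have hab0 : ¬(A % D = 0 ∧ B % D = 0) := by
    rintro ⟨h1, h2⟩
    exact hwnd ⟨Int.dvd_of_emod_eq_zero h1, Int.dvd_of_emod_eq_zero h2⟩
  obtain ⟨qA, hqA⟩ : ∃ t : ℤ, t = A / D := ⟨_, rfl⟩
  obtain ⟨qB, hqB⟩ : ∃ t : ℤ, t = B / D := ⟨_, rfl⟩
  have hma : A % D = A - D * qA := by rw [hqA]; exact Int.emod_def A D
  have hmb : B % D = B - D * qB := by rw [hqB]; exact Int.emod_def B D
  have hz1 : D * (w1 - qA * u.1 - qB * v.1) = (A % D) * u.1 + (B % D) * v.1 := by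
    rw [hma, hmb, hA, hB]; linear_combination w1 * hDdef
  have hz2 : D * (w2 - qA * u.2 - qB * v.2) = (A % D) * u.2 + (B % D) * v.2 := by
    rw [hma, hmb, hA, hB]; linear_combination w2 * hDdef
  rcases le_or_gt (A % D + B % D) D with hle | hgt
  · exact key _ _ _ _ ha0 haD hb0 hbD hle hab0 hz1 hz2
  · have ha1 : 1 ≤ A % D := by omega
    have hb1 : 1 ≤ B % D := by omega
    refine key (D - A % D) (D - B % D) (u.1 + v.1 - (w1 - qA * u.1 - qB * v.1))
      (u.2 + v.2 - (w2 - qA * u.2 - qB * v.2)) (by omega) (by omega) (by omega) (by omega)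
      (by omega) (by omega) ?_ ?_
    · linear_combination -hz1
    · linear_combination -hz2

def crs (x y z : ℤ × ℤ) : ℤ := (y.1 - x.1) * (z.2 - x.2) - (y.2 - x.2) * (z.1 - x.1)

lemma m213 {α : Type*} (a b c : α) : ({a, b, c} : Multiset α) = {b, a, c} := Multiset.cons_swap a b {c}

lemma m132 {α : Type*} (a b c : α) : ({a, b, c} : Multiset α) = {a, c, b} := mswap23 a b c

lemma m321 {α : Type*} (a b c : α) : ({a, b, c} : Multiset α) = {c, b, a} :=
  (mrot a b c).trans (m213 b c a)

lemma forward_dir {d : ℕ} (hd : 0 < d) (p q r p' q' r' : ℤ × ℤ)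
    (hS5 : convexHull ℝ ({pt d p, pt d q, pt d r} : Set (ℝ × ℝ)) ∩ Ld d
      = {pt d p, pt d q, pt d r})
    (hT5 : convexHull ℝ ({pt d p', pt d q', pt d r'} : Set (ℝ × ℝ)) ∩ Ld d
      = {pt d p', pt d q', pt d r'})
    (hccwS : ccwZ p q r) (hccwT : ccwZ p' q' r') (g : GMap)
    (hg : g.app '' convexHull ℝ ({pt d p, pt d q, pt d r} : Set (ℝ × ℝ))
      = convexHull ℝ ({pt d p', pt d q', pt d r'} : Set (ℝ × ℝ))) :
    triWeight d p q r = triWeight d p' q' r' := by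
  have hd0 : d ≠ 0 := hd.ne'
  have himg : g.app '' ({pt d p, pt d q, pt d r} : Set (ℝ × ℝ))
      = {pt d p', pt d q', pt d r'} := by
    rw [← hS5, ← image_inter_Ld g hd0, hg, hT5]
  have hset : ({pt d (nmap g d p), pt d (nmap g d q), pt d (nmap g d r)} : Set (ℝ × ℝ))
      = {pt d p', pt d q', pt d r'} := by
    rw [← himg]
    simp only [Set.image_insert_eq, Set.image_singleton, app_pt g hd0]
  have horient : ∀ x y z : ℤ × ℤ,
      ((nmap g d y).1 - (nmap g d x).1) * ((nmap g d z).2 - (nmap g d x).2) -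
        ((nmap g d y).2 - (nmap g d x).2) * ((nmap g d z).1 - (nmap g d x).1) =
      (g.a * g.e - g.b * g.c) * ((y.1 - x.1) * (z.2 - x.2) - (y.2 - x.2) * (z.1 - x.1)) := by
    intro x y z
    simp only [nmap]
    ring
  have hmemp : p' = nmap g d p ∨ p' = nmap g d q ∨ p' = nmap g d r := by
    have h : pt d p' ∈ ({pt d (nmap g d p), pt d (nmap g d q), pt d (nmap g d r)}
        : Set (ℝ × ℝ)) := by rw [hset]; exact Set.mem_insert _ _
    rcases h with h | h | h
    exacts [Or.inl (pt_inj hd0 h), Or.inr (Or.inl (pt_inj hd0 h)),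
      Or.inr (Or.inr (pt_inj hd0 h))]
  have hmemq : q' = nmap g d p ∨ q' = nmap g d q ∨ q' = nmap g d r := by
    have h : pt d q' ∈ ({pt d (nmap g d p), pt d (nmap g d q), pt d (nmap g d r)}
        : Set (ℝ × ℝ)) := by rw [hset]; exact Set.mem_insert_of_mem _ (Set.mem_insert _ _)
    rcases h with h | h | h
    exacts [Or.inl (pt_inj hd0 h), Or.inr (Or.inl (pt_inj hd0 h)),
      Or.inr (Or.inr (pt_inj hd0 h))]
  have hmemr : r' = nmap g d p ∨ r' = nmap g d q ∨ r' = nmap g d r := by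
    have h : pt d r' ∈ ({pt d (nmap g d p), pt d (nmap g d q), pt d (nmap g d r)}
        : Set (ℝ × ℝ)) := by
      rw [hset]
      exact Set.mem_insert_of_mem _ (Set.mem_insert_of_mem _ rfl)
    rcases h with h | h | h
    exacts [Or.inl (pt_inj hd0 h), Or.inr (Or.inl (pt_inj hd0 h)),
      Or.inr (Or.inr (pt_inj hd0 h))]
  have hne12 : p' ≠ q' := by
    intro h
    have hc := hccwT
    simp only [ccwZ] at hc
    rw [h] at hc
    nlinarith [hc]
  have hne13 : p' ≠ r' := by
    intro h
    have hc := hccwT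
    simp only [ccwZ] at hc
    rw [h] at hc
    nlinarith [hc]
  have hne23 : q' ≠ r' := by
    intro h
    have hc := hccwT
    simp only [ccwZ] at hc
    rw [h] at hc
    nlinarith [hc]
  rcases g.unimod with hdet | hdet <;>
    rcases hmemp with hp | hp | hp <;> rcases hmemq with hq | hq | hq <;>
      rcases hmemr with hr | hr | hr
  · exact absurd (hp.trans hq.symm) hne12
  · exact absurd (hp.trans hq.symm) hne12
  · exact absurd (hp.trans hq.symm) hne12
  · exact absurd (hp.trans hr.symm) hne13
  · exact absurd (hq.trans hr.symm) hne23
  · subst hp; subst hq; subst hr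
    rw [triWeight, triWeight, segWeight_nmap, segWeight_nmap, segWeight_nmap, hdet]
    push_cast
    rw [one_mul, one_mul, one_mul]
  · exact absurd (hp.trans hr.symm) hne13
  · exfalso
    subst hp; subst hq; subst hr
    simp only [ccwZ] at hccwS hccwT
    rw [horient p r q, hdet] at hccwT
    nlinarith [hccwS, hccwT]
  · exact absurd (hq.trans hr.symm) hne23
  · exact absurd (hq.trans hr.symm) hne23
  · exact absurd (hp.trans hr.symm) hne13
  · exfalso
    subst hp; subst hq; subst hr
    simp only [ccwZ] at hccwS hccwT
    rw [horient q p r, hdet] at hccwT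
    nlinarith [hccwS, hccwT]
  · exact absurd (hp.trans hq.symm) hne12
  · exact absurd (hp.trans hq.symm) hne12
  · exact absurd (hp.trans hq.symm) hne12
  · subst hp; subst hq; subst hr
    rw [triWeight, triWeight, segWeight_nmap, segWeight_nmap, segWeight_nmap, hdet]
    push_cast
    rw [one_mul, one_mul, one_mul]
    exact mrot _ _ _
  · exact absurd (hp.trans hr.symm) hne13
  · exact absurd (hq.trans hr.symm) hne23
  · exact absurd (hq.trans hr.symm) hne23
  · subst hp; subst hq; subst hr
    rw [triWeight, triWeight, segWeight_nmap, segWeight_nmap, segWeight_nmap, hdet]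
    push_cast
    rw [one_mul, one_mul, one_mul]
    exact (mrot _ _ _).trans (mrot _ _ _)
  · exact absurd (hp.trans hr.symm) hne13
  · exfalso
    subst hp; subst hq; subst hr
    simp only [ccwZ] at hccwS hccwT
    rw [horient r q p, hdet] at hccwT
    nlinarith [hccwS, hccwT]
  · exact absurd (hq.trans hr.symm) hne23
  · exact absurd (hp.trans hr.symm) hne13
  · exact absurd (hp.trans hq.symm) hne12
  · exact absurd (hp.trans hq.symm) hne12
  · exact absurd (hp.trans hq.symm) hne12
  · exact absurd (hp.trans hq.symm) hne12
  · exact absurd (hp.trans hq.symm) hne12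
  · exact absurd (hp.trans hq.symm) hne12
  · exact absurd (hp.trans hr.symm) hne13
  · exact absurd (hq.trans hr.symm) hne23
  · exfalso
    subst hp; subst hq; subst hr
    simp only [ccwZ] at hccwS hccwT
    rw [horient p q r, hdet] at hccwT
    nlinarith [hccwS, hccwT]
  · exact absurd (hp.trans hr.symm) hne13
  · subst hp; subst hq; subst hr
    rw [triWeight, triWeight, segWeight_nmap, segWeight_nmap, segWeight_nmap, hdet]
    push_cast
    rw [neg_one_mul, neg_one_mul, neg_one_mul]
    simp only [← segWeight_antisymm]
    exact m321 _ _ _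
  · exact absurd (hq.trans hr.symm) hne23
  · exact absurd (hq.trans hr.symm) hne23
  · exact absurd (hp.trans hr.symm) hne13
  · subst hp; subst hq; subst hr
    rw [triWeight, triWeight, segWeight_nmap, segWeight_nmap, segWeight_nmap, hdet]
    push_cast
    rw [neg_one_mul, neg_one_mul, neg_one_mul]
    simp only [← segWeight_antisymm]
    exact m132 _ _ _
  · exact absurd (hp.trans hq.symm) hne12
  · exact absurd (hp.trans hq.symm) hne12
  · exact absurd (hp.trans hq.symm) hne12
  · exfalso
    subst hp; subst hq; subst hr
    simp only [ccwZ] at hccwS hccwT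
    rw [horient q r p, hdet] at hccwT
    nlinarith [hccwS, hccwT]
  · exact absurd (hp.trans hr.symm) hne13
  · exact absurd (hq.trans hr.symm) hne23
  · exact absurd (hq.trans hr.symm) hne23
  · exfalso
    subst hp; subst hq; subst hr
    simp only [ccwZ] at hccwS hccwT
    rw [horient r p q, hdet] at hccwT
    nlinarith [hccwS, hccwT]
  · exact absurd (hp.trans hr.symm) hne13
  · subst hp; subst hq; subst hr
    rw [triWeight, triWeight, segWeight_nmap, segWeight_nmap, segWeight_nmap, hdet]
    push_cast
    rw [neg_one_mul, neg_one_mul, neg_one_mul]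
    simp only [← segWeight_antisymm]
    exact m213 _ _ _
  · exact absurd (hq.trans hr.symm) hne23
  · exact absurd (hp.trans hr.symm) hne13
  · exact absurd (hp.trans hq.symm) hne12
  · exact absurd (hp.trans hq.symm) hne12
  · exact absurd (hp.trans hq.symm) hne12

lemma triWeight_nmap1 {d : ℕ} (g : GMap) (x y z : ℤ × ℤ) (hdet : g.a * g.e - g.b * g.c = 1) :
    triWeight d (nmap g d x) (nmap g d y) (nmap g d z) = triWeight d x y z := by
  rw [triWeight, triWeight, segWeight_nmap, segWeight_nmap, segWeight_nmap, hdet]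
  push_cast
  rw [one_mul, one_mul, one_mul]

lemma segW {d : ℕ} (x y : ℤ × ℤ) (n : ℤ) (h : x.1 * y.2 - x.2 * y.1 = n) :
    segWeight d x y = ((n : ℤ) : ZMod d) := by rw [← h]; rfl

def sOf (p q r : ℤ × ℤ) : ℤ := (r.2 - p.2) * p.1 - (r.1 - p.1) * p.2
def tOf (p q r : ℤ × ℤ) : ℤ := -((q.2 - p.2) * p.1) + (q.1 - p.1) * p.2

def mkA (p q r : ℤ × ℤ) (h : (q.1 - p.1) * (r.2 - p.2) - (q.2 - p.2) * (r.1 - p.1) = 1) :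
    GMap :=
  ⟨r.2 - p.2, -(r.1 - p.1), -(q.2 - p.2), q.1 - p.1, 0, 0, Or.inl (by linear_combination h)⟩

def mkB (p q r : ℤ × ℤ) (h : (q.1 - p.1) * (r.2 - p.2) - (q.2 - p.2) * (r.1 - p.1) = 1) :
    GMap :=
  ⟨q.1 - p.1, r.1 - p.1, q.2 - p.2, r.2 - p.2, 0, 0, Or.inl (by linear_combination h)⟩

lemma mkA_p {d : ℕ} (p q r : ℤ × ℤ) (h : (q.1-p.1)*(r.2-p.2) - (q.2-p.2)*(r.1-p.1) = 1) :
    nmap (mkA p q r h) d p = (sOf p q r, tOf p q r) := by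
  refine Prod.ext ?_ ?_ <;> simp [nmap, mkA, sOf, tOf] <;> ring

lemma mkA_q {d : ℕ} (p q r : ℤ × ℤ) (h : (q.1-p.1)*(r.2-p.2) - (q.2-p.2)*(r.1-p.1) = 1) :
    nmap (mkA p q r h) d q = (sOf p q r + 1, tOf p q r) := by
  refine Prod.ext ?_ ?_ <;> simp [nmap, mkA, sOf, tOf]
  · linear_combination h
  · ring

lemma mkA_r {d : ℕ} (p q r : ℤ × ℤ) (h : (q.1-p.1)*(r.2-p.2) - (q.2-p.2)*(r.1-p.1) = 1) :
    nmap (mkA p q r h) d r = (sOf p q r, tOf p q r + 1) := by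
  refine Prod.ext ?_ ?_ <;> simp [nmap, mkA, sOf, tOf]
  · ring
  · linear_combination h

lemma mkB_mkA {d : ℕ} (p q r : ℤ × ℤ) (h : (q.1-p.1)*(r.2-p.2) - (q.2-p.2)*(r.1-p.1) = 1)
    (x : ℤ × ℤ) : nmap (mkB p q r h) d (nmap (mkA p q r h) d x) = x := by
  refine Prod.ext ?_ ?_ <;> simp [nmap, mkA, mkB]
  · linear_combination x.1 * h
  · linear_combination x.2 * h

lemma triW_norm {d : ℕ} (p q r : ℤ × ℤ)
    (h : (q.1-p.1)*(r.2-p.2) - (q.2-p.2)*(r.1-p.1) = 1) :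
    triWeight d p q r = {((-(tOf p q r) : ℤ) : ZMod d),
      ((sOf p q r + tOf p q r + 1 : ℤ) : ZMod d), ((-(sOf p q r) : ℤ) : ZMod d)} := by
  have h1 := triWeight_nmap1 (d := d) (mkA p q r h) p q r (by simp [mkA]; linear_combination h)
  rw [← h1, mkA_p, mkA_q, mkA_r]
  rw [triWeight]
  rw [segW (sOf p q r, tOf p q r) (sOf p q r + 1, tOf p q r) (-(tOf p q r)) (by
    show sOf p q r * tOf p q r - tOf p q r * (sOf p q r + 1) = -(tOf p q r); ring)]
  rw [segW (sOf p q r + 1, tOf p q r) (sOf p q r, tOf p q r + 1) (sOf p q r + tOf p q r + 1) (by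
    show (sOf p q r + 1) * (tOf p q r + 1) - tOf p q r * sOf p q r
      = sOf p q r + tOf p q r + 1; ring)]
  rw [segW (sOf p q r, tOf p q r + 1) (sOf p q r, tOf p q r) (-(sOf p q r)) (by
    show sOf p q r * tOf p q r - (tOf p q r + 1) * sOf p q r = -(sOf p q r); ring)]

lemma dk {d : ℕ} {m n : ℤ} (h : ((m : ℤ) : ZMod d) = ((n : ℤ) : ZMod d)) :
    ∃ k : ℤ, n = m + d * k := by
  have h2 := (ZMod.intCast_eq_intCast_iff _ _ _).mp h
  obtain ⟨k, hk⟩ := Int.ModEq.dvd h2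
  exact ⟨k, by linarith⟩

lemma img_hull (g : GMap) (A B C : ℝ × ℝ) {X Y Z : ℝ × ℝ}
    (h : ({g.app A, g.app B, g.app C} : Set (ℝ × ℝ)) = {X, Y, Z}) :
    g.app '' convexHull ℝ ({A, B, C} : Set (ℝ × ℝ))
      = convexHull ℝ ({X, Y, Z} : Set (ℝ × ℝ)) := by
  rw [app_image_hull]
  congr 1
  rw [← h]
  simp [Set.image_insert_eq]

lemma detS_one {d : ℕ} (hd : 0 < d) (p q r : ℤ × ℤ)
    (hmin : convexHull ℝ ({pt d p, pt d q, pt d r} : Set (ℝ × ℝ)) ∩ Ld d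
      = {pt d p, pt d q, pt d r})
    (hccw : ccwZ p q r) :
    (q.1 - p.1) * (r.2 - p.2) - (q.2 - p.2) * (r.1 - p.1) = 1 := by
  have e1 : p + (q - p) = q := by abel
  have e2 : p + (r - p) = r := by abel
  have h := det_one hd p (q - p) (r - p)
    (by rw [e1, e2]; exact hmin)
    (by simp only [Prod.fst_sub, Prod.snd_sub]; exact hccw)
  simpa using h

lemma assemble {d : ℕ} (hd0 : d ≠ 0) (p q r p' q' r' τ1 τ2 τ3 : ℤ × ℤ)
    (hdS : (q.1-p.1)*(r.2-p.2) - (q.2-p.2)*(r.1-p.1) = 1)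
    (hdT : (q'.1-p'.1)*(r'.2-p'.2) - (q'.2-p'.2)*(r'.1-p'.1) = 1) (mid : GMap)
    (m1 : nmap mid d (nmap (mkA p q r hdS) d p) = nmap (mkA p' q' r' hdT) d τ1)
    (m2 : nmap mid d (nmap (mkA p q r hdS) d q) = nmap (mkA p' q' r' hdT) d τ2)
    (m3 : nmap mid d (nmap (mkA p q r hdS) d r) = nmap (mkA p' q' r' hdT) d τ3)
    (hτ : ({pt d τ1, pt d τ2, pt d τ3} : Set (ℝ × ℝ)) = {pt d p', pt d q', pt d r'}) :
    ∃ g : GMap, g.app '' convexHull ℝ ({pt d p, pt d q, pt d r} : Set (ℝ × ℝ))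
      = convexHull ℝ ({pt d p', pt d q', pt d r'} : Set (ℝ × ℝ)) := by
  refine ⟨(mkB p' q' r' hdT).comp (mid.comp (mkA p q r hdS)), ?_⟩
  have c : ∀ x τ, nmap mid d (nmap (mkA p q r hdS) d x) = nmap (mkA p' q' r' hdT) d τ →
      ((mkB p' q' r' hdT).comp (mid.comp (mkA p q r hdS))).app (pt d x) = pt d τ := by
    intro x τ hxτ
    rw [app_comp, app_comp, app_pt _ hd0, app_pt _ hd0, hxτ, app_pt _ hd0, mkB_mkA]
  rw [← hτ]
  exact img_hull _ _ _ _ (by rw [c p τ1 m1, c q τ2 m2, c r τ3 m3])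

set_option maxHeartbeats 2000000 in
lemma backward_dir {d : ℕ} (hd : 0 < d) (p q r p' q' r' : ℤ × ℤ)
    (hS5 : convexHull ℝ ({pt d p, pt d q, pt d r} : Set (ℝ × ℝ)) ∩ Ld d
      = {pt d p, pt d q, pt d r})
    (hT5 : convexHull ℝ ({pt d p', pt d q', pt d r'} : Set (ℝ × ℝ)) ∩ Ld d
      = {pt d p', pt d q', pt d r'})
    (hccwS : ccwZ p q r) (hccwT : ccwZ p' q' r')
    (hw : triWeight d p q r = triWeight d p' q' r') :
    ∃ g : GMap, g.app '' convexHull ℝ ({pt d p, pt d q, pt d r} : Set (ℝ × ℝ))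
      = convexHull ℝ ({pt d p', pt d q', pt d r'} : Set (ℝ × ℝ)) := by
  have hd0 : d ≠ 0 := hd.ne'
  have hdS := detS_one hd p q r hS5 hccwS
  have hdT := detS_one hd p' q' r' hT5 hccwT
  rw [triW_norm p q r hdS, triW_norm p' q' r' hdT] at hw
  set s := sOf p q r with hs
  set t := tOf p q r with ht
  set s' := sOf p' q' r' with hs'
  set t' := tOf p' q' r' with ht'
  have hAp := mkA_p (d := d) p q r hdS
  have hAq := mkA_q (d := d) p q r hdS
  have hAr := mkA_r (d := d) p q r hdS
  have hA'p := mkA_p (d := d) p' q' r' hdT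
  have hA'q := mkA_q (d := d) p' q' r' hdT
  have hA'r := mkA_r (d := d) p' q' r' hdT
  rcases multiset_triple_cases _ _ _ _ _ _ hw with
    ⟨h1, h2, h3⟩ | ⟨h1, h2, h3⟩ | ⟨h1, h2, h3⟩ | ⟨h1, h2, h3⟩ | ⟨h1, h2, h3⟩ | ⟨h1, h2, h3⟩

  · obtain ⟨k1, hk1⟩ := dk h3
    obtain ⟨k2, hk2⟩ := dk h1
    refine assemble hd0 p q r p' q' r' p' q' r' hdS hdT
      ⟨1, 0, 0, 1, -k1, -k2, Or.inl (by norm_num)⟩ ?_ ?_ ?_ rfl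
    · rw [hAp, hA'p]
      refine Prod.ext ?_ ?_ <;> simp [nmap] <;> linarith [hk1, hk2]
    · rw [hAq, hA'q]
      refine Prod.ext ?_ ?_ <;> simp [nmap] <;> linarith [hk1, hk2]
    · rw [hAr, hA'r]
      refine Prod.ext ?_ ?_ <;> simp [nmap] <;> linarith [hk1, hk2]
  · obtain ⟨k1, hk1⟩ := dk h2
    obtain ⟨k2, hk2⟩ := dk h1
    refine assemble hd0 p q r p' q' r' q' p' r' hdS hdT
      ⟨-1, -1, 0, 1, -k1, -k2, Or.inr (by norm_num)⟩ ?_ ?_ ?_ (by ext w; simp only [Set.mem_insert_iff, Set.mem_singleton_iff]; tauto)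
    · rw [hAp, hA'q]
      refine Prod.ext ?_ ?_ <;> simp [nmap] <;> linarith [hk1, hk2]
    · rw [hAq, hA'p]
      refine Prod.ext ?_ ?_ <;> simp [nmap] <;> linarith [hk1, hk2]
    · rw [hAr, hA'r]
      refine Prod.ext ?_ ?_ <;> simp [nmap] <;> linarith [hk1, hk2]
  · obtain ⟨k1, hk1⟩ := dk h3
    obtain ⟨k2, hk2⟩ := dk h2
    refine assemble hd0 p q r p' q' r' r' q' p' hdS hdT
      ⟨1, 0, -1, -1, -k1, -k2, Or.inr (by norm_num)⟩ ?_ ?_ ?_ (by ext w; simp only [Set.mem_insert_iff, Set.mem_singleton_iff]; tauto)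
    · rw [hAp, hA'r]
      refine Prod.ext ?_ ?_ <;> simp [nmap] <;> linarith [hk1, hk2]
    · rw [hAq, hA'q]
      refine Prod.ext ?_ ?_ <;> simp [nmap] <;> linarith [hk1, hk2]
    · rw [hAr, hA'p]
      refine Prod.ext ?_ ?_ <;> simp [nmap] <;> linarith [hk1, hk2]
  · obtain ⟨k1, hk1⟩ := dk h2
    obtain ⟨k2, hk2⟩ := dk h3
    refine assemble hd0 p q r p' q' r' q' r' p' hdS hdT
      ⟨-1, -1, 1, 0, -k1, -k2, Or.inl (by norm_num)⟩ ?_ ?_ ?_ (by ext w; simp only [Set.mem_insert_iff, Set.mem_singleton_iff]; tauto)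
    · rw [hAp, hA'q]
      refine Prod.ext ?_ ?_ <;> simp [nmap] <;> linarith [hk1, hk2]
    · rw [hAq, hA'r]
      refine Prod.ext ?_ ?_ <;> simp [nmap] <;> linarith [hk1, hk2]
    · rw [hAr, hA'p]
      refine Prod.ext ?_ ?_ <;> simp [nmap] <;> linarith [hk1, hk2]
  · obtain ⟨k1, hk1⟩ := dk h1
    obtain ⟨k2, hk2⟩ := dk h2
    refine assemble hd0 p q r p' q' r' r' p' q' hdS hdT
      ⟨0, 1, -1, -1, -k1, -k2, Or.inl (by norm_num)⟩ ?_ ?_ ?_ (by ext w; simp only [Set.mem_insert_iff, Set.mem_singleton_iff]; tauto)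
    · rw [hAp, hA'r]
      refine Prod.ext ?_ ?_ <;> simp [nmap] <;> linarith [hk1, hk2]
    · rw [hAq, hA'p]
      refine Prod.ext ?_ ?_ <;> simp [nmap] <;> linarith [hk1, hk2]
    · rw [hAr, hA'q]
      refine Prod.ext ?_ ?_ <;> simp [nmap] <;> linarith [hk1, hk2]
  · obtain ⟨k1, hk1⟩ := dk h1
    obtain ⟨k2, hk2⟩ := dk h3
    refine assemble hd0 p q r p' q' r' p' r' q' hdS hdT
      ⟨0, 1, 1, 0, -k1, -k2, Or.inr (by norm_num)⟩ ?_ ?_ ?_ (by ext w; simp only [Set.mem_insert_iff, Set.mem_singleton_iff]; tauto)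
    · rw [hAp, hA'p]
      refine Prod.ext ?_ ?_ <;> simp [nmap] <;> linarith [hk1, hk2]
    · rw [hAq, hA'r]
      refine Prod.ext ?_ ?_ <;> simp [nmap] <;> linarith [hk1, hk2]
    · rw [hAr, hA'q]
      refine Prod.ext ?_ ?_ <;> simp [nmap] <;> linarith [hk1, hk2]

/-- two `d`-minimal triangles are `G`-equivalent iff their weight
multisets (of counterclockwise-oriented edges) agree. -/
theorem G_equiv_iff_weight_eq (d : ℕ) (hd : 0 < d) (p q r p' q' r' : ℤ × ℤ)
    (hS : IsMinimalTriangle d (pt d p) (pt d q) (pt d r))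
    (hT : IsMinimalTriangle d (pt d p') (pt d q') (pt d r'))
    (hccwS : ccwZ p q r) (hccwT : ccwZ p' q' r') :
    (∃ g : GMap,
        g.app '' convexHull ℝ ({pt d p, pt d q, pt d r} : Set (ℝ × ℝ))
          = convexHull ℝ ({pt d p', pt d q', pt d r'} : Set (ℝ × ℝ))) ↔
      triWeight d p q r = triWeight d p' q' r' := by
  obtain ⟨-, -, -, -, hS5⟩ := hS
  obtain ⟨-, -, -, -, hT5⟩ := hT
  constructor
  · rintro ⟨g, hg⟩
    exact forward_dir hd p q r p' q' r' hS5 hT5 hccwS hccwT g hg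
  · intro hw
    exact backward_dir hd p q r p' q' r' hS5 hT5 hccwS hccwT hw
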